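/- Let μ be a join-semilattice with bottom. Then μ is a projective B-module if and only if μ is isomorphic to the module B(S,≤) of finitely generated lower subsets of a lower finite poset (S,≤). -/

import Mathlib

/-- Finitely generated lower subsets of a preordered set. -/
def FGLower (S : Type*) [Preorder S] : Type _ :=
  {L : LowerSet S // ∃ F : Finset S, L = lowerClosure (F : Set S)}

namespace FGLower

variable {S : Type*} [Preorder S]

instance : SemilatticeSup (FGLower S) :=
  Subtype.semilatticeSup fun L M ⟨F, hF⟩ ⟨G, hG⟩ => by
    classical
    exact ⟨F ∪ G, by simp [hF, hG, lowerClosure_union]⟩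

instance : OrderBot (FGLower S) :=
  Subtype.orderBot ⟨∅, by simp⟩

end FGLower

/-- A `𝔹`-module is projective if it is a retract of a free `𝔹`-module. -/
def IsProjectiveB (μ : Type) [SemilatticeSup μ] [OrderBot μ] : Prop :=
  ∃ T : Type, haveI := Classical.decEq T;
    ∃ (s : SupBotHom μ (Finset T)) (r : SupBotHom (Finset T) μ), ∀ x, r (s x) = x

/- ### Auxiliary lemmas -/

namespace Stmt6Aux

variable {S : Type*} [Preorder S]

lemma fglower_le_iff {L M : FGLower S} : L ≤ M ↔ (L.1 : Set S) ⊆ (M.1 : Set S) :=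
  Iff.rfl

lemma fglower_ext {L M : FGLower S} (h : (L.1 : Set S) = (M.1 : Set S)) : L = M :=
  Subtype.ext (SetLike.coe_injective h)

/-- Build an element of `FGLower S` from a finite lower set. -/
def mk' (A : Set S) (h1 : IsLowerSet A) (h2 : A.Finite) : FGLower S :=
  ⟨⟨A, h1⟩, h2.toFinset, by
    apply SetLike.coe_injective
    rw [Set.Finite.coe_toFinset]
    exact (h1.lowerClosure).symm⟩

@[simp] lemma coe_mk' (A : Set S) (h1 : IsLowerSet A) (h2 : A.Finite) :
    ((mk' A h1 h2).1 : Set S) = A := rfl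

lemma carrier_finite (hS : ∀ x : S, {y : S | y ≤ x}.Finite) (L : FGLower S) :
    (L.1 : Set S).Finite := by
  obtain ⟨F, hF⟩ := L.2
  rw [hF]
  rw [coe_lowerClosure]
  exact F.finite_toSet.biUnion fun a _ => hS a

lemma coe_sup (L M : FGLower S) : ((L ⊔ M).1 : Set S) = (L.1 : Set S) ∪ (M.1 : Set S) := rfl

lemma coe_bot : (((⊥ : FGLower S)).1 : Set S) = ∅ := rfl

/-- Transfer of `FGLower` along a surjective map reflecting the order. -/
noncomputable def fglowerCongr {α β : Type*} [Preorder α] [Preorder β] (f : α → β)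
    (hsurj : Function.Surjective f) (hle : ∀ a b : α, f a ≤ f b ↔ a ≤ b) :
    FGLower α ≃o FGLower β := by
  classical
  have himg_lower : ∀ L : FGLower α, IsLowerSet (f '' (L.1 : Set α)) := by
    rintro L a b hba ⟨c, hc, rfl⟩
    obtain ⟨b0, rfl⟩ := hsurj b
    exact ⟨b0, L.1.lower ((hle b0 c).1 hba) hc, rfl⟩
  have hpre_lower : ∀ M : FGLower β, IsLowerSet (f ⁻¹' (M.1 : Set β)) := by
    intro M a b hba ha
    exact M.1.lower ((hle b a).2 hba) ha
  have himg_fg : ∀ L : FGLower α, ∃ G : Finset β,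
      f '' (L.1 : Set α) = ↑(lowerClosure (G : Set β)) := by
    rintro ⟨L, F, rfl⟩
    refine ⟨F.image f, ?_⟩
    ext b
    simp only [Set.mem_image, coe_lowerClosure, Set.mem_iUnion, Finset.coe_image,
      Set.mem_Iic, Finset.mem_coe, Finset.mem_image, mem_lowerClosure]
    constructor
    · rintro ⟨a, ⟨c, hc, hac⟩, rfl⟩
      exact ⟨f c, ⟨c, hc, rfl⟩, (hle a c).2 hac⟩
    · rintro ⟨_, ⟨c, hc, rfl⟩, hb⟩
      obtain ⟨a, rfl⟩ := hsurj b
      exact ⟨a, ⟨c, hc, (hle a c).1 hb⟩, rfl⟩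
  have hpre_fg : ∀ M : FGLower β, ∃ F : Finset α,
      f ⁻¹' (M.1 : Set β) = ↑(lowerClosure (F : Set α)) := by
    rintro ⟨M, G, rfl⟩
    refine ⟨G.image fun b => (hsurj b).choose, ?_⟩
    ext a
    simp only [Set.mem_preimage, coe_lowerClosure, Set.mem_iUnion, Set.mem_Iic,
      Finset.mem_coe, Finset.coe_image, Set.mem_image, Finset.mem_image, mem_lowerClosure]
    constructor
    · rintro ⟨b, hb, hab⟩
      refine ⟨(hsurj b).choose, ⟨b, hb, rfl⟩, ?_⟩
      rw [← hle]
      rw [(hsurj b).choose_spec]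
      exact hab
    · rintro ⟨_, ⟨b, hb, rfl⟩, hab⟩
      refine ⟨b, hb, ?_⟩
      rw [← (hsurj b).choose_spec]
      exact (hle _ _).2 hab
  refine
    { toFun := fun L => ⟨⟨f '' (L.1 : Set α), himg_lower L⟩, by
        obtain ⟨G, hG⟩ := himg_fg L
        exact ⟨G, SetLike.coe_injective hG⟩⟩
      invFun := fun M => ⟨⟨f ⁻¹' (M.1 : Set β), hpre_lower M⟩, by
        obtain ⟨F, hF⟩ := hpre_fg M
        exact ⟨F, SetLike.coe_injective hF⟩⟩
      left_inv := ?_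
      right_inv := ?_
      map_rel_iff' := ?_ }
  · intro L
    apply fglower_ext
    show f ⁻¹' (f '' (L.1 : Set α)) = (L.1 : Set α)
    ext a
    constructor
    · rintro ⟨a', ha', haa'⟩
      exact L.1.lower ((hle a a').1 (haa' ▸ le_refl (f a'))) ha'
    · intro ha
      exact ⟨a, ha, rfl⟩
  · intro M
    apply fglower_ext
    exact Set.image_preimage_eq _ hsurj
  · intro L M
    change f '' (L.1 : Set α) ⊆ f '' (M.1 : Set α) ↔ (L.1 : Set α) ⊆ (M.1 : Set α)
    show f '' _ ⊆ f '' _ ↔ _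
    constructor
    · intro h a ha
      obtain ⟨a', ha', ha'a⟩ := h ⟨a, ha, rfl⟩
      exact M.1.lower ((hle a a').1 (ha'a ▸ le_refl (f a'))) ha'
    · intro h
      exact Set.image_mono h

lemma lowerFinite_transfer {α β : Type*} [Preorder α] [Preorder β] (f : α → β)
    (hsurj : Function.Surjective f) (hle : ∀ a b : α, f a ≤ f b ↔ a ≤ b)
    (hfin : ∀ a : α, {a' : α | a' ≤ a}.Finite) (b : β) : {b' : β | b' ≤ b}.Finite := by
  obtain ⟨a, rfl⟩ := hsurj b
  refine ((hfin a).image f).subset ?_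
  intro b' hb'
  obtain ⟨a', rfl⟩ := hsurj b'
  exact ⟨a', (hle a' a).1 hb', rfl⟩

/-- Easy direction: `FGLower` over a lower finite poset is projective. -/
lemma isProjective_of_iso (μ : Type) [SemilatticeSup μ] [OrderBot μ]
    (S : Type) [Preorder S] (hS : ∀ x : S, {y : S | y ≤ x}.Finite)
    (e : μ ≃o FGLower S) : IsProjectiveB μ := by
  classical
  refine ⟨S, ?_⟩
  refine ⟨⟨⟨fun x => (carrier_finite hS (e x)).toFinset, ?_⟩, ?_⟩,
    ⟨⟨fun F => e.symm ⟨lowerClosure (F : Set S), F, rfl⟩, ?_⟩, ?_⟩, ?_⟩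
  · -- s preserves sup
    intro x y
    ext a
    simp only [Set.Finite.mem_toFinset, Finset.sup_eq_union, Finset.mem_union, e.map_sup,
      coe_sup, Set.mem_union]
  · -- s preserves bot
    ext a
    simp only [Set.Finite.mem_toFinset, e.map_bot, coe_bot]
    simp
  · -- r preserves sup
    intro F G
    show e.symm _ = e.symm _ ⊔ e.symm _
    refine Eq.trans ?_ (e.symm.map_sup _ _)
    congr 1
    apply fglower_ext
    refine Eq.trans ?_ (coe_sup _ _).symm
    simp [lowerClosure_union]
  · -- r preserves bot
    dsimp only
    rw [← e.symm.map_bot]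
    congr 1
    apply fglower_ext
    rw [coe_bot]
    simp
  · -- retraction
    intro x
    simp only [SupBotHom.coe_mk, SupHom.coe_mk]
    refine e.symm_apply_eq.2 ?_
    apply fglower_ext
    show ((lowerClosure (↑(carrier_finite hS (e x)).toFinset : Set S) : LowerSet S) : Set S) = _
    rw [Set.Finite.coe_toFinset]
    exact ((e x).1.lower').lowerClosure

end Stmt6Aux

open Stmt6Aux in
/-- A join-semilattice `μ` with bottom is a projective `𝔹`-module
iff it is isomorphic (as a `𝔹`-module, equivalently as a poset) to the module
`B(S,≤)` of finitely generated lower subsets of a lower finite poset `(S,≤)`. -/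
theorem stmt6 (μ : Type) [SemilatticeSup μ] [OrderBot μ] :
    IsProjectiveB μ ↔
      ∃ (S : Type) (inst : PartialOrder S), haveI := inst;
        (∀ x : S, {y : S | y ≤ x}.Finite) ∧ Nonempty (μ ≃o FGLower S) := by
  classical
  constructor
  · rintro ⟨T, s, r, hrs⟩
    letI : DecidableEq T := Classical.decEq T
    set E : T → Finset T := fun u => s (r {u}) with hEdef
    have hE1 : ∀ A : Finset T, s (r A) = A.sup E := by
      intro A
      conv_lhs => rw [← Finset.sup_singleton_eq_self A]
      exact Finset.comp_sup_eq_sup_comp (fun B => s (r B))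
        (fun x y => by simp only [map_sup]) (by simp only [map_bot])
    have hmem : ∀ (x : T) (A : Finset T), x ∈ s (r A) ↔ ∃ u ∈ A, x ∈ E u := by
      intro x A; rw [hE1]; exact Finset.mem_sup
    have hEE : ∀ u : T, s (r (E u)) = E u := by
      intro u
      rw [hEdef]
      show s (r (s (r {u}))) = s (r {u})
      rw [hrs]
    have hsub : ∀ {v u : T}, v ∈ E u → E v ⊆ E u := by
      intro v u hv x hx
      rw [← hEE u]
      exact (hmem x (E u)).2 ⟨v, hv, hx⟩
    have key : ∀ {t u : T}, t ∈ E u → ∃ v, v ∈ E v ∧ v ∈ E u ∧ t ∈ E v := by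
      intro t u ht
      have hC : ∃ v ∈ E u, t ∈ E v := by
        rw [← hEE u] at ht
        exact (hmem t (E u)).1 ht
      set C : Finset T := (E u).filter (fun v => t ∈ E v) with hCdef
      have hCne : C.Nonempty := by
        obtain ⟨v, hv, htv⟩ := hC
        exact ⟨v, Finset.mem_filter.2 ⟨hv, htv⟩⟩
      obtain ⟨v, hvC, hvmin⟩ := Finset.exists_min_image C (fun v => (E v).card) hCne
      obtain ⟨hvu, htv⟩ := Finset.mem_filter.1 hvC
      have htv' : t ∈ s (r (E v)) := by rw [hEE]; exact htv
      obtain ⟨w, hw, htw⟩ := (hmem t (E v)).1 htv'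
      have hwu : w ∈ E u := hsub hvu hw
      have hwC : w ∈ C := Finset.mem_filter.2 ⟨hwu, htw⟩
      have hEwv : E w = E v :=
        Finset.eq_of_subset_of_card_le (hsub hw) (hvmin w hwC)
      exact ⟨w, by rw [hEwv]; exact hw, hwu, htw⟩
    let Sp := {v : T // v ∈ E v}
    letI instSp : Preorder Sp :=
      { le := fun a b => (a : T) ∈ E (b : T)
        le_refl := fun a => a.2
        le_trans := fun a b c hab hbc => hsub hbc hab }
    have hSpfin : ∀ t : Sp, {y : Sp | y ≤ t}.Finite := by
      intro t
      exact (Set.Finite.preimage (Set.injOn_of_injective Subtype.val_injective)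
        (E (t : T)).finite_toSet).subset fun y hy => hy
    have hsx_lower : ∀ x : μ, IsLowerSet {t : Sp | (t : T) ∈ s x} := by
      intro x a b hba ha
      have h : (b : T) ∈ s (r (s x)) := (hmem _ _).2 ⟨(a : T), ha, hba⟩
      rwa [hrs] at h
    have hsx_fin : ∀ x : μ, {t : Sp | (t : T) ∈ s x}.Finite := fun x =>
      Set.Finite.preimage (Set.injOn_of_injective Subtype.val_injective)
        (s x).finite_toSet
    let Φ : μ → FGLower Sp := fun x => mk' _ (hsx_lower x) (hsx_fin x)
    let Ψ : FGLower Sp → μ := fun L =>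
      r (((carrier_finite hSpfin L).toFinset).image Subtype.val)
    have hr1 : ∀ A : Finset T, r A = A.sup fun u => r {u} := by
      intro A
      conv_lhs => rw [← Finset.sup_singleton_eq_self A]
      exact Finset.comp_sup_eq_sup_comp r (map_sup r) (map_bot r)
    have hrmono : ∀ {F G : Finset T}, F ⊆ G → r F ≤ r G := fun h =>
      OrderHomClass.mono r (Finset.le_iff_subset.2 h)
    have hFmem : ∀ (L : FGLower Sp) (u : T),
        u ∈ ((carrier_finite hSpfin L).toFinset).image Subtype.val ↔
          ∃ h : u ∈ E u, (⟨u, h⟩ : Sp) ∈ (L.1 : Set Sp) := by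
      intro L u
      simp only [Finset.mem_image, Set.Finite.mem_toFinset]
      constructor
      · rintro ⟨t, ht, rfl⟩
        exact ⟨t.2, ht⟩
      · rintro ⟨h1, h2⟩
        exact ⟨⟨u, h1⟩, h2, rfl⟩
    have hΦcarrier : ∀ x : μ, ((Φ x).1 : Set Sp) = {t : Sp | (t : T) ∈ s x} := fun x => rfl
    have hΨΦ : ∀ x : μ, Ψ (Φ x) = x := by
      intro x
      apply le_antisymm
      · conv_rhs => rw [← hrs x]
        refine hrmono ?_
        intro u hu
        obtain ⟨h1, h2⟩ := (hFmem (Φ x) u).1 hu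
        exact h2
      · conv_lhs => rw [← hrs x]
        rw [hr1 (s x)]
        apply Finset.sup_le
        intro u hu
        have hu' : u ∈ s (r (s x)) := by rw [hrs]; exact hu
        obtain ⟨w, hw, huw⟩ := (hmem u (s x)).1 hu'
        obtain ⟨v, hvv, hvw, huv⟩ := key huw
        have hvx : v ∈ s x := by
          have h : v ∈ s (r (s x)) := (hmem v (s x)).2 ⟨w, hw, hvw⟩
          rwa [hrs] at h
        have h1 : r {u} ≤ r (E v) := hrmono (Finset.singleton_subset_iff.2 huv)
        have h2 : r (E v) = r {v} := by
          rw [hEdef]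
          show r (s (r {v})) = r {v}
          rw [hrs]
        have h3 : r {v} ≤ Ψ (Φ x) := by
          refine hrmono (Finset.singleton_subset_iff.2 ?_)
          exact (hFmem (Φ x) v).2 ⟨hvv, hvx⟩
        exact h1.trans (h2.le.trans h3)
    have hΦΨ : ∀ L : FGLower Sp, Φ (Ψ L) = L := by
      intro L
      apply fglower_ext
      rw [hΦcarrier]
      ext t
      simp only [Set.mem_setOf_eq, SetLike.mem_coe]
      constructor
      · intro ht
        obtain ⟨u, hu, htu⟩ := (hmem _ _).1 ht
        obtain ⟨h1, h2⟩ := (hFmem L u).1 hu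
        exact L.1.lower (show t ≤ (⟨u, h1⟩ : Sp) from htu) h2
      · intro ht
        refine (hmem _ _).2 ⟨(t : T), ?_, t.2⟩
        exact (hFmem L (t : T)).2 ⟨t.2, by simpa using ht⟩
    have hΨmono : ∀ {L M : FGLower Sp}, L ≤ M → Ψ L ≤ Ψ M := by
      intro L M hLM
      refine hrmono (Finset.image_subset_image ?_)
      intro t ht
      simp only [Set.Finite.mem_toFinset] at ht ⊢
      exact (fglower_le_iff.1 hLM) ht
    have hΦmono : ∀ {x y : μ}, x ≤ y → Φ x ≤ Φ y := by
      intro x y hxy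
      rw [fglower_le_iff, hΦcarrier, hΦcarrier]
      intro t ht
      exact Finset.le_iff_subset.1 (OrderHomClass.mono s hxy) ht
    let iso : μ ≃o FGLower Sp :=
      { toFun := Φ
        invFun := Ψ
        left_inv := hΨΦ
        right_inv := hΦΨ
        map_rel_iff' := by
          intro x y
          simp only [Equiv.coe_fn_mk]
          constructor
          · intro h
            have h2 := hΨmono h
            rwa [hΨΦ, hΨΦ] at h2
          · exact hΦmono }
    have hsurj : Function.Surjective (toAntisymmetrization (α := Sp) (· ≤ ·)) :=
      fun b => Quotient.inductionOn' b fun a => ⟨a, rfl⟩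
    have hle : ∀ a b : Sp, toAntisymmetrization (α := Sp) (· ≤ ·) a ≤
        toAntisymmetrization (α := Sp) (· ≤ ·) b ↔ a ≤ b :=
      fun a b => toAntisymmetrization_le_toAntisymmetrization_iff
    refine ⟨Antisymmetrization Sp (· ≤ ·), inferInstance, ?_, ?_⟩
    · exact lowerFinite_transfer (toAntisymmetrization (· ≤ ·)) hsurj hle hSpfin
    · exact ⟨iso.trans (fglowerCongr (toAntisymmetrization (· ≤ ·)) hsurj hle)⟩
  · rintro ⟨S, inst, hfin, ⟨e⟩⟩
    exact isProjective_of_iso μ S hfin e
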